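/- Let M be a finitely generated ℂ[[t]]-module equipped with a ℂ-linear operator D such that D(t·m) = t·D(m) + t·m (i.e., D is compatible with t d/dt) and each quotient M/tᵐM is finite-dimensional over ℂ. Then the D-locally-finite part of M decomposes as a direct sum of generalized D-eigenspaces, each finite-dimensional, with eigenvalues lying in finitely many cosets β₁+ℤ, …, β_k+ℤ of ℤ in ℂ. -/
import Mathlib

set_option linter.unusedSectionVars false

open PowerSeries Module LinearMap Pointwise

namespace Stmt12Aux

variable {M : Type*} [AddCommGroup M] [Module (PowerSeries ℂ) M]
  [Module ℂ M] [IsScalarTower ℂ (PowerSeries ℂ) M]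

/-- The `R`-submodule `X^k M`. -/
noncomputable abbrev pR (M : Type*) [AddCommGroup M] [Module (PowerSeries ℂ) M] (k : ℕ) :
    Submodule (PowerSeries ℂ) M :=
  (Ideal.span {(PowerSeries.X : PowerSeries ℂ)}) ^ k • (⊤ : Submodule (PowerSeries ℂ) M)

/-- `X^k M` as a `ℂ`-submodule. -/
noncomputable abbrev pc (M : Type*) [AddCommGroup M] [Module (PowerSeries ℂ) M] [Module ℂ M]
    [IsScalarTower ℂ (PowerSeries ℂ) M] (k : ℕ) : Submodule ℂ M :=
  (pR M k).restrictScalars ℂ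

lemma mem_pc {k : ℕ} {x : M} :
    x ∈ pc M k ↔ ∃ m : M, (PowerSeries.X : PowerSeries ℂ) ^ k • m = x := by
  rw [pc, Submodule.restrictScalars_mem, pR, Ideal.span_singleton_pow,
    Submodule.ideal_span_singleton_smul]
  constructor
  · intro hx
    have hx' : x ∈ (PowerSeries.X : PowerSeries ℂ) ^ k • ((⊤ : Submodule (PowerSeries ℂ) M) : Set M) := by
      rwa [← Submodule.coe_pointwise_smul, SetLike.mem_coe]
    obtain ⟨m, -, hm⟩ := hx'
    exact ⟨m, hm⟩
  · rintro ⟨m, rfl⟩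
    exact Submodule.smul_mem_pointwise_smul m _ ⊤ trivial

lemma mem_pc_zero (x : M) : x ∈ pc M 0 :=
  mem_pc.mpr ⟨x, by simp⟩

lemma pc_mono {j k : ℕ} (h : j ≤ k) : pc M k ≤ pc M j := fun x hx => by
  rw [Submodule.restrictScalars_mem] at hx ⊢
  exact Submodule.smul_mono_left (Ideal.pow_le_pow_right h) hx

variable {D : M →ₗ[ℂ] M}

lemma Dpow (hD : ∀ m : M, D ((PowerSeries.X : PowerSeries ℂ) • m)
      = (PowerSeries.X : PowerSeries ℂ) • D m + (PowerSeries.X : PowerSeries ℂ) • m)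
    (k : ℕ) (m : M) :
    D ((PowerSeries.X : PowerSeries ℂ) ^ k • m)
      = (PowerSeries.X : PowerSeries ℂ) ^ k • D m
        + (k : ℂ) • ((PowerSeries.X : PowerSeries ℂ) ^ k • m) := by
  induction k generalizing m with
  | zero => simp
  | succ k ih =>
    have h1 : (PowerSeries.X : PowerSeries ℂ) ^ (k + 1) • m
        = (PowerSeries.X : PowerSeries ℂ) ^ k • ((PowerSeries.X : PowerSeries ℂ) • m) := by
      rw [smul_smul, ← pow_succ]
    rw [h1, ih (PowerSeries.X • m), hD, smul_add, smul_smul, smul_smul, ← pow_succ,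
      Nat.cast_succ, add_smul, one_smul]
    abel

lemma D_mem_pc (hD : ∀ m : M, D ((PowerSeries.X : PowerSeries ℂ) • m)
      = (PowerSeries.X : PowerSeries ℂ) • D m + (PowerSeries.X : PowerSeries ℂ) • m)
    {k : ℕ} {x : M} (hx : x ∈ pc M k) : D x ∈ pc M k := by
  obtain ⟨m, rfl⟩ := mem_pc.mp hx
  rw [Dpow hD]
  exact add_mem (mem_pc.mpr ⟨D m, rfl⟩) (Submodule.smul_mem _ _ (mem_pc.mpr ⟨m, rfl⟩))

/-- shifting the eigenvalue across `X^k`. -/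
lemma shift (hD : ∀ m : M, D ((PowerSeries.X : PowerSeries ℂ) • m)
      = (PowerSeries.X : PowerSeries ℂ) • D m + (PowerSeries.X : PowerSeries ℂ) • m)
    (μ : ℂ) (k : ℕ) (n : ℕ) (m : M) :
    ((D - μ • 1) ^ n) ((PowerSeries.X : PowerSeries ℂ) ^ k • m)
      = (PowerSeries.X : PowerSeries ℂ) ^ k • (((D - (μ - k) • 1) ^ n) m) := by
  have base : ∀ m : M, (D - μ • 1) ((PowerSeries.X : PowerSeries ℂ) ^ k • m)
      = (PowerSeries.X : PowerSeries ℂ) ^ k • ((D - (μ - k) • 1) m) := by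
    intro m
    simp only [LinearMap.sub_apply, LinearMap.smul_apply, Module.End.one_apply, Dpow hD, smul_sub,
      sub_smul]
    rw [smul_comm (μ : ℂ) ((PowerSeries.X : PowerSeries ℂ) ^ k) m,
      smul_comm ((k : ℕ) : ℂ) ((PowerSeries.X : PowerSeries ℂ) ^ k) m]
    abel
  induction n generalizing m with
  | zero => simp
  | succ n ih =>
    rw [pow_succ, Module.End.mul_apply, base, ih ((D - (μ - k) • 1) m), pow_succ,
      Module.End.mul_apply]


section Quot

variable (hD : ∀ m : M, D ((PowerSeries.X : PowerSeries ℂ) • m)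
      = (PowerSeries.X : PowerSeries ℂ) • D m + (PowerSeries.X : PowerSeries ℂ) • m)

/-- The operator induced by `D` on `M / X^k M`. -/
noncomputable abbrev Dq (k : ℕ) : Module.End ℂ (M ⧸ pc M k) :=
  Submodule.mapQ (pc M k) (pc M k) D (fun _ hx => D_mem_pc hD hx)

lemma Dq_mk (k : ℕ) (x : M) :
    Dq hD k (Submodule.Quotient.mk x) = Submodule.Quotient.mk (D x) :=
  Submodule.mapQ_apply _ _ _ _

lemma Dq_pow_mk (k : ℕ) (μ : ℂ) (n : ℕ) (x : M) :
    ((Dq hD k - μ • 1) ^ n) (Submodule.Quotient.mk x)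
      = Submodule.Quotient.mk (((D - μ • 1) ^ n) x) := by
  induction n generalizing x with
  | zero => simp
  | succ n ih =>
    have h1 : (Dq hD k - μ • 1) (Submodule.Quotient.mk x)
        = Submodule.Quotient.mk ((D - μ • 1) x) := by
      simp only [LinearMap.sub_apply, LinearMap.smul_apply, Module.End.one_apply, Dq_mk]
      rw [← Submodule.Quotient.mk_smul, ← Submodule.Quotient.mk_sub]
    rw [pow_succ, Module.End.mul_apply, h1, ih, pow_succ, Module.End.mul_apply]

/-- Multiplication by `X^k` as a `ℂ`-linear map. -/
noncomputable def Tk (k : ℕ) : M →ₗ[ℂ] M :=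
  (LinearMap.lsmul (PowerSeries ℂ) M ((PowerSeries.X : PowerSeries ℂ) ^ k)).restrictScalars ℂ

lemma Tk_apply (k : ℕ) (m : M) : Tk (M := M) k m = (PowerSeries.X : PowerSeries ℂ) ^ k • m := rfl

/-- The map `M/XM → M/X^{k+1}M` induced by multiplication by `X^k`. -/
noncomputable abbrev Phi (k : ℕ) : (M ⧸ pc M 1) →ₗ[ℂ] (M ⧸ pc M (k + 1)) :=
  Submodule.mapQ (pc M 1) (pc M (k + 1)) (Tk k) (by
    intro x hx
    obtain ⟨m, rfl⟩ := mem_pc.mp hx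
    rw [Submodule.mem_comap, Tk_apply, pow_one, smul_smul, ← pow_succ]
    exact mem_pc.mpr ⟨m, rfl⟩)

lemma Phi_mk (k : ℕ) (m : M) :
    Phi k (Submodule.Quotient.mk m)
      = Submodule.Quotient.mk ((PowerSeries.X : PowerSeries ℂ) ^ k • m) :=
  Submodule.mapQ_apply _ _ _ _

lemma Phi_inter (k : ℕ) (c : ℂ) (x : M ⧸ pc M 1) :
    Phi k ((Dq hD 1 - c • 1) x) = (Dq hD (k + 1) - (c + k) • 1) (Phi k x) := by
  obtain ⟨m, rfl⟩ := Submodule.Quotient.mk_surjective _ x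
  have h1 : (Dq hD 1 - c • 1) (Submodule.Quotient.mk m)
      = Submodule.Quotient.mk ((D - c • 1) m) := by
    simp only [LinearMap.sub_apply, LinearMap.smul_apply, Module.End.one_apply, Dq_mk]
    rw [← Submodule.Quotient.mk_smul, ← Submodule.Quotient.mk_sub]
  rw [h1, Phi_mk, Phi_mk]
  have := shift (D := D) hD (c + k) k 1 m
  simp only [pow_one, add_sub_cancel_right] at this
  rw [← this]
  simp only [LinearMap.sub_apply, LinearMap.smul_apply, Module.End.one_apply, Dq_mk]
  rw [← Submodule.Quotient.mk_smul, ← Submodule.Quotient.mk_sub]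

lemma Phi_inter_pow (k : ℕ) (c : ℂ) (n : ℕ) (x : M ⧸ pc M 1) :
    Phi k (((Dq hD 1 - c • 1) ^ n) x) = ((Dq hD (k + 1) - (c + k) • 1) ^ n) (Phi k x) := by
  induction n generalizing x with
  | zero => simp
  | succ n ih =>
    rw [pow_succ, Module.End.mul_apply, ih, Phi_inter, pow_succ, Module.End.mul_apply]

/-- The key descent step. -/
lemma step [FiniteDimensional ℂ (M ⧸ pc M 1)] {μ : ℂ} {k : ℕ}
    (hev : ¬ (Dq (M := M) hD 1).HasEigenvalue (μ - k))
    {v : M} (hv : v ∈ pc M k) (hgen : v ∈ Module.End.maxGenEigenspace D μ) :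
    v ∈ pc M (k + 1) := by
  obtain ⟨m, rfl⟩ := mem_pc.mp hv
  obtain ⟨n, hn⟩ := (Module.End.mem_maxGenEigenspace D μ _).mp hgen
  set g : Module.End ℂ (M ⧸ pc M 1) := Dq hD 1 - (μ - k) • 1 with hg
  have hginj : Function.Injective g := by
    rw [← LinearMap.ker_eq_bot]
    have h0 : (Dq (M := M) hD 1).eigenspace (μ - k) = ⊥ := not_not.mp hev
    rwa [Module.End.eigenspace_def] at h0
  set K : Submodule ℂ (M ⧸ pc M 1) := LinearMap.ker (Phi k) with hKdef
  have hK : ∀ x ∈ K, g x ∈ K := by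
    intro x hx
    rw [hKdef, LinearMap.mem_ker] at hx ⊢
    have := Phi_inter hD k (μ - k) x
    rw [hg, this, LinearMap.sub_apply, LinearMap.smul_apply, Module.End.one_apply, hx, map_zero,
      smul_zero, sub_zero]
  have hstep1 : ∀ x, g x ∈ K → x ∈ K := by
    intro x hx
    have hsurj : Function.Surjective (g.restrict hK) :=
      LinearMap.injective_iff_surjective.mp
        (fun a b hab => Subtype.ext (hginj (congrArg Subtype.val hab)))
    obtain ⟨u, hu⟩ := hsurj ⟨g x, hx⟩
    have : g (u : M ⧸ pc M 1) = g x := by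
      have := congrArg Subtype.val hu
      rwa [LinearMap.restrict_apply] at this
    have := hginj this
    rw [← this]
    exact u.2
  have main : ∀ (n : ℕ) (x), (g ^ n) x ∈ K → x ∈ K := by
    intro n
    induction n with
    | zero => intro x hx; simpa using hx
    | succ n ih =>
      intro x hx
      rw [pow_succ, Module.End.mul_apply] at hx
      exact hstep1 x (ih _ hx)
  have hker : Submodule.Quotient.mk m ∈ K := by
    apply main n
    rw [hKdef, LinearMap.mem_ker, Phi_inter_pow, sub_add_cancel, Phi_mk, Dq_pow_mk, hn,
      Submodule.Quotient.mk_zero]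
  rw [hKdef, LinearMap.mem_ker, Phi_mk] at hker
  exact (Submodule.Quotient.mk_eq_zero _).mp hker

/-- Krull intersection. -/
lemma iInf_pR [Module.Finite (PowerSeries ℂ) M] : (⨅ k : ℕ, pR M k) = ⊥ := by
  have hne : Ideal.span ({(PowerSeries.X : PowerSeries ℂ)} : Set (PowerSeries ℂ)) ≠ ⊤ := by
    rw [← PowerSeries.maximalIdeal_eq_span_X]
    exact Ideal.IsMaximal.ne_top inferInstance
  obtain ⟨n, f, hf⟩ := Module.Finite.exists_fin' (PowerSeries ℂ) M
  let N := (Fin n → PowerSeries ℂ) ⧸ LinearMap.ker f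
  let e : N ≃ₗ[PowerSeries ℂ] M := f.quotKerEquivOfSurjective hf
  have hN : (⨅ k : ℕ, (Ideal.span ({(PowerSeries.X : PowerSeries ℂ)} : Set (PowerSeries ℂ))) ^ k
      • (⊤ : Submodule (PowerSeries ℂ) N)) = ⊥ :=
    Ideal.iInf_pow_smul_eq_bot_of_isLocalRing (R := PowerSeries ℂ)
      (I := Ideal.span ({(PowerSeries.X : PowerSeries ℂ)} : Set (PowerSeries ℂ))) (M := N) hne
  rw [eq_bot_iff]
  intro x hx
  have hy : e.symm x ∈ (⨅ k : ℕ, (Ideal.span ({(PowerSeries.X : PowerSeries ℂ)}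
      : Set (PowerSeries ℂ))) ^ k • (⊤ : Submodule (PowerSeries ℂ) N)) := by
    rw [Submodule.mem_iInf]
    intro k
    have hx' : x ∈ pR M k := (Submodule.mem_iInf _).mp hx k
    have hmap : Submodule.map (e.symm : M →ₗ[PowerSeries ℂ] N) (pR M k)
        = (Ideal.span ({(PowerSeries.X : PowerSeries ℂ)} : Set (PowerSeries ℂ))) ^ k
          • (⊤ : Submodule (PowerSeries ℂ) N) := by
      rw [pR, Submodule.map_smul'', Submodule.map_top, LinearEquiv.range]
    rw [← hmap]
    exact ⟨x, hx', rfl⟩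
  rw [hN] at hy
  have h0 : e.symm x = 0 := hy
  have := congrArg e h0
  simpa using this

lemma eventually_zero [Module.Finite (PowerSeries ℂ) M] [FiniteDimensional ℂ (M ⧸ pc M 1)]
    {μ : ℂ} {K : ℕ} (hK : ∀ k : ℕ, K ≤ k → ¬ (Dq (M := M) hD 1).HasEigenvalue (μ - k))
    {v : M} (hgen : v ∈ Module.End.maxGenEigenspace D μ) (hvK : v ∈ pc M K) : v = 0 := by
  have h1 : ∀ k : ℕ, K ≤ k → v ∈ pc M k := by
    intro k hk
    induction k, hk using Nat.le_induction with
    | base => exact hvK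
    | succ k hk ih => exact step hD (hK k hk) ih hgen
  have h2 : v ∈ (⨅ k : ℕ, pR M k) := by
    rw [Submodule.mem_iInf]
    intro k
    rcases le_total K k with h | h
    · exact h1 k h
    · exact pc_mono h hvK
  rw [iInf_pR] at h2
  simpa using h2

lemma exists_K [FiniteDimensional ℂ (M ⧸ pc M 1)] (μ : ℂ) :
    ∃ K : ℕ, ∀ k : ℕ, K ≤ k → ¬ (Dq (M := M) hD 1).HasEigenvalue (μ - k) := by
  have h1 : Set.Finite (Module.End.HasEigenvalue (Dq (M := M) hD 1)) :=
    Module.End.finite_hasEigenvalue _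
  have hfin : {k : ℕ | (Dq (M := M) hD 1).HasEigenvalue (μ - k)}.Finite := by
    have heq : {k : ℕ | (Dq (M := M) hD 1).HasEigenvalue (μ - k)} =
        (fun k : ℕ => μ - (k : ℂ)) ⁻¹' (setOf (Module.End.HasEigenvalue (Dq (M := M) hD 1))) :=
      rfl
    rw [heq]
    apply Set.Finite.preimage _ h1
    intro a _ b _ hab
    have : ((a : ℕ) : ℂ) = ((b : ℕ) : ℂ) := by
      have := sub_right_injective hab
      exact this
    exact_mod_cast this
  obtain ⟨K, hK⟩ := hfin.bddAbove
  refine ⟨K + 1, fun k hk hcontra => ?_⟩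
  have := hK hcontra
  omega

end Quot

end Stmt12Aux


/-- Choosing representatives of finitely many cosets of `ℤ` in `ℂ`. -/
lemma coset_reps (S : Finset ℂ) :
    ∃ (r : ℕ) (β : Fin r → ℂ),
      (∀ i j, i ≠ j → ∀ z : ℤ, β i - β j ≠ (z : ℂ)) ∧
      (∀ μ : ℂ, (∃ s ∈ S, ∃ k : ℕ, μ = s + k) → ∃ i : Fin r, ∃ z : ℤ, μ = β i + z) := by
  classical
  set G : AddSubgroup ℂ := AddSubgroup.zmultiples (1 : ℂ) with hGdef
  have key : ∀ a b : ℂ, (QuotientAddGroup.mk a : ℂ ⧸ G) = QuotientAddGroup.mk b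
      ↔ ∃ z : ℤ, b - a = (z : ℂ) := by
    intro a b
    rw [QuotientAddGroup.eq]
    constructor
    · intro h
      obtain ⟨z, hz⟩ := AddSubgroup.mem_zmultiples_iff.mp h
      rw [zsmul_eq_mul, mul_one] at hz
      exact ⟨z, by linear_combination -hz⟩
    · rintro ⟨z, hz⟩
      refine AddSubgroup.mem_zmultiples_iff.mpr ⟨z, ?_⟩
      rw [zsmul_eq_mul, mul_one]
      linear_combination -hz
  have hout : ∀ q : ℂ ⧸ G, (QuotientAddGroup.mk (Quotient.out q) : ℂ ⧸ G) = q :=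
    QuotientAddGroup.out_eq'
  set Qf : Finset (ℂ ⧸ G) := S.image (QuotientAddGroup.mk) with hQf
  refine ⟨Qf.card, fun i => Quotient.out ((Qf.equivFin.symm i : {x // x ∈ Qf}) : ℂ ⧸ G), ?_, ?_⟩
  · intro i j hij z hz
    apply hij
    have h1 : ((Qf.equivFin.symm j : {x // x ∈ Qf}) : ℂ ⧸ G)
        = ((Qf.equivFin.symm i : {x // x ∈ Qf}) : ℂ ⧸ G) := by
      rw [← hout ((Qf.equivFin.symm j : {x // x ∈ Qf}) : ℂ ⧸ G),
        ← hout ((Qf.equivFin.symm i : {x // x ∈ Qf}) : ℂ ⧸ G)]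
      exact (key _ _).mpr ⟨z, hz⟩
    have := Qf.equivFin.symm.injective (Subtype.ext h1)
    exact this.symm
  · rintro μ ⟨s, hsS, k, rfl⟩
    have hq : (QuotientAddGroup.mk s : ℂ ⧸ G) ∈ Qf := by
      rw [hQf]
      exact Finset.mem_image_of_mem _ hsS
    refine ⟨Qf.equivFin ⟨_, hq⟩, ?_⟩
    have h1 : ((Qf.equivFin.symm (Qf.equivFin ⟨(QuotientAddGroup.mk s : ℂ ⧸ G), hq⟩)
        : {x // x ∈ Qf}) : ℂ ⧸ G) = (QuotientAddGroup.mk s : ℂ ⧸ G) := by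
      rw [Equiv.symm_apply_apply]
    have h2 := (key _ _).mp ((hout _).trans h1)
    obtain ⟨z, hz⟩ := h2
    refine ⟨z + k, ?_⟩
    push_cast
    linear_combination hz

open Stmt12Aux in
/-- Let `M` be a finitely generated `ℂ[[t]]`-module with an operator `D` satisfying
`D(t·m) = t·D(m) + t·m` and with all quotients `M/tᵏM` finite-dimensional. Then the
`D`-locally-finite part of `M` is the (direct) sum of the generalized `D`-eigenspaces, each
finite-dimensional, with eigenvalues lying in finitely many cosets of `ℤ` in `ℂ`. -/
theorem stmt_12 (M : Type*) [AddCommGroup M] [Module (PowerSeries ℂ) M]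
    [Module.Finite (PowerSeries ℂ) M]
    [Module ℂ M] [IsScalarTower ℂ (PowerSeries ℂ) M]
    (D : M →ₗ[ℂ] M)
    (hD : ∀ m : M, D ((PowerSeries.X : PowerSeries ℂ) • m)
        = (PowerSeries.X : PowerSeries ℂ) • D m + (PowerSeries.X : PowerSeries ℂ) • m)
    (hfd : ∀ k : ℕ, FiniteDimensional ℂ
      (M ⧸ ((Ideal.span {(PowerSeries.X : PowerSeries ℂ)}) ^ k •
        (⊤ : Submodule (PowerSeries ℂ) M)))) :
    (∃ (r : ℕ) (β : Fin r → ℂ),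
      (∀ i j, i ≠ j → ∀ z : ℤ, β i - β j ≠ (z : ℂ)) ∧
      (∀ μ : ℂ, Module.End.maxGenEigenspace D μ ≠ ⊥ → ∃ i : Fin r, ∃ z : ℤ, μ = β i + z)) ∧
    (∀ μ : ℂ, FiniteDimensional ℂ (Module.End.maxGenEigenspace D μ)) ∧
    iSupIndep (fun μ : ℂ => Module.End.maxGenEigenspace D μ) ∧
    (∀ m : M, (∃ Wm : Submodule ℂ M,
        FiniteDimensional ℂ Wm ∧ m ∈ Wm ∧ ∀ v ∈ Wm, D v ∈ Wm)
      ↔ m ∈ ⨆ μ : ℂ, Module.End.maxGenEigenspace D μ) := by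
  classical
  haveI hq : ∀ k : ℕ, FiniteDimensional ℂ (M ⧸ pc M k) := fun k => by
    haveI := hfd k
    exact (Submodule.Quotient.restrictScalarsEquiv ℂ (pR M k)).symm.finiteDimensional
  haveI hq1 : FiniteDimensional ℂ (M ⧸ pc M 1) := hq 1
  -- Part 2 : each generalized eigenspace is finite dimensional
  have part2 : ∀ μ : ℂ, FiniteDimensional ℂ (Module.End.maxGenEigenspace D μ) := by
    intro μ
    obtain ⟨K, hK⟩ := exists_K hD μ
    have hker : LinearMap.ker
        (((pc M K).mkQ).comp (Module.End.maxGenEigenspace D μ).subtype) = ⊥ := by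
      rw [eq_bot_iff]
      rintro ⟨x, hx⟩ hmem
      rw [LinearMap.mem_ker, LinearMap.comp_apply, Submodule.subtype_apply,
        Submodule.mkQ_apply, Submodule.Quotient.mk_eq_zero] at hmem
      have hx0 : x = 0 := eventually_zero hD hK hx hmem
      rw [Submodule.mem_bot]
      exact Subtype.ext hx0
    exact FiniteDimensional.of_injective _ (LinearMap.ker_eq_bot.mp hker)
  -- eigenvalues come from the special fiber up to natural number shifts
  have part1aux : ∀ μ : ℂ, Module.End.maxGenEigenspace D μ ≠ ⊥ →
      ∃ k : ℕ, (Dq (M := M) hD 1).HasEigenvalue (μ - k) := by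
    intro μ hμ
    by_contra hcon
    push_neg at hcon
    apply hμ
    rw [eq_bot_iff]
    intro v hv
    have h0 : ∀ k : ℕ, 0 ≤ k → ¬ (Dq (M := M) hD 1).HasEigenvalue (μ - k) :=
      fun k _ => hcon k
    have hv0 : v = 0 := eventually_zero hD h0 hv (mem_pc_zero v)
    simp [hv0]
  refine ⟨?_, part2, ?_, ?_⟩
  · -- Part 1 : coset representatives
    obtain ⟨r, β, hdist, hcover⟩ :=
      coset_reps (Module.End.finite_hasEigenvalue (Dq (M := M) hD 1)).toFinset
    refine ⟨r, β, hdist, ?_⟩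
    intro μ hμ
    obtain ⟨k, hk⟩ := part1aux μ hμ
    refine hcover μ ⟨μ - k, ?_, k, by ring⟩
    rw [Set.Finite.mem_toFinset]
    exact hk
  · -- Part 3 : independence
    exact Module.End.independent_maxGenEigenspace D
  · -- Part 4 : local finiteness
    intro m
    constructor
    · rintro ⟨W, hWfd, hmW, hWinv⟩
      haveI := hWfd
      have h1 : (⨆ μ : ℂ, Module.End.maxGenEigenspace (D.restrict hWinv) μ) = ⊤ :=
        Module.End.iSup_maxGenEigenspace_eq_top _
      have h2 : m ∈ Submodule.map W.subtype
          (⨆ μ : ℂ, Module.End.maxGenEigenspace (D.restrict hWinv) μ) :=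
        ⟨⟨m, hmW⟩, by rw [h1]; trivial, rfl⟩
      rw [Submodule.map_iSup] at h2
      have hle : (⨆ μ : ℂ, Submodule.map W.subtype
            (Module.End.maxGenEigenspace (D.restrict hWinv) μ))
          ≤ ⨆ μ : ℂ, Module.End.maxGenEigenspace D μ := by
        refine iSup_mono fun μ => ?_
        have h3 := Module.End.genEigenspace_restrict D W ⊤ μ hWinv
        show Submodule.map W.subtype (Module.End.genEigenspace (D.restrict hWinv) μ ⊤)
            ≤ Module.End.genEigenspace D μ ⊤
        rw [h3]
        exact Submodule.map_comap_le _ _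
      exact hle h2
    · intro hm
      obtain ⟨s, hs⟩ := Submodule.mem_iSup_iff_exists_finset.mp hm
      haveI : ∀ μ : ℂ, FiniteDimensional ℂ (Module.End.maxGenEigenspace D μ) := part2
      refine ⟨⨆ μ ∈ s, Module.End.maxGenEigenspace D μ, ?_, hs, ?_⟩
      · have heq : (⨆ μ ∈ s, Module.End.maxGenEigenspace D μ)
            = s.sup (fun μ => Module.End.maxGenEigenspace D μ) := (Finset.sup_eq_iSup _ _).symm
        rw [heq]
        infer_instance
      · intro v hv
        have hmap : Submodule.map D (⨆ μ ∈ s, Module.End.maxGenEigenspace D μ)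
            ≤ ⨆ μ ∈ s, Module.End.maxGenEigenspace D μ := by
          rw [Submodule.map_iSup]
          refine iSup_le fun μ => ?_
          rw [Submodule.map_iSup]
          refine iSup_le fun hμ => ?_
          refine le_trans ?_ (le_iSup₂ (f := fun μ _ => Module.End.maxGenEigenspace D μ) μ hμ)
          rw [Submodule.map_le_iff_le_comap]
          exact fun x hx => Module.End.mapsTo_maxGenEigenspace_of_comm (Commute.refl D) μ hx
        exact hmap ⟨v, hv, rfl⟩
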